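/- arXiv:1910.10898 — 2 statements merged into one kernel-verified Lean document; each statement's English description precedes it below -/
import Mathlib

section
/- Suppose Y and X are conditionally independent given BᵀX. Then the vector of conditional expectiles ξ_X = (f_{τ₁}(X), …, f_{τ_k}(X)) is also conditionally independent of X given BᵀX; consequently every dimension-reduction basis for the regression of Y on X is a dimension-reduction basis for the regression of ξ_X on X (Proposition 1). -/
open MeasureTheory ProbabilityTheory Matrix

/-- The asymmetric squared-error loss `φ_τ`. -/
noncomputable def phiLoss (τ c : ℝ) : ℝ := if c ≤ 0 then (1 - τ) * c ^ 2 else τ * c ^ 2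

/-- `a` is the `τ`-th expectile of the measure `ν`: it is the unique minimizer of the
asymmetric squared-error risk `b ↦ ∫ φ_τ(y - b) ν(dy)`. -/
def IsExpectile (τ : ℝ) (ν : MeasureTheory.Measure ℝ) (a : ℝ) : Prop :=
  ∀ b : ℝ, b ≠ a → ∫ y, phiLoss τ (y - a) ∂ν < ∫ y, phiLoss τ (y - b) ∂ν

noncomputable def dphi (τ c : ℝ) : ℝ := if c ≤ 0 then 2*(1-τ)*c else 2*τ*c

lemma measurable_dphi (τ : ℝ) : Measurable (dphi τ) := by
  unfold dphi
  exact Measurable.ite (measurableSet_Iic) (by fun_prop) (by fun_prop)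

lemma measurable_phiLoss (τ : ℝ) : Measurable (phiLoss τ) := by
  unfold phiLoss
  exact Measurable.ite (measurableSet_Iic) (by fun_prop) (by fun_prop)

lemma abs_dphi_le {τ : ℝ} (hτ : τ ∈ Set.Ioo (0:ℝ) 1) (c : ℝ) : |dphi τ c| ≤ 2 * |c| := by
  obtain ⟨h0, h1⟩ := hτ
  unfold dphi
  split_ifs with h
  · rw [abs_mul]
    have : |2*(1-τ)| = 2*(1-τ) := abs_of_nonneg (by linarith)
    nlinarith [abs_nonneg c]
  · rw [abs_mul]
    have : |2*τ| = 2*τ := abs_of_nonneg (by linarith)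
    nlinarith [abs_nonneg c]

lemma abs_phiLoss_le {τ : ℝ} (hτ : τ ∈ Set.Ioo (0:ℝ) 1) (c : ℝ) : |phiLoss τ c| ≤ c ^ 2 := by
  obtain ⟨h0, h1⟩ := hτ
  unfold phiLoss
  split_ifs with h <;> rw [abs_of_nonneg (by nlinarith [sq_nonneg c])] <;> nlinarith [sq_nonneg c]

lemma dphi_sub_lb {τ : ℝ} (hτ : τ ∈ Set.Ioo (0:ℝ) 1) {c' c : ℝ} (h : c' ≤ c) :
    2 * min τ (1-τ) * (c - c') ≤ dphi τ c - dphi τ c' := by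
  obtain ⟨h0, h1⟩ := hτ
  unfold dphi
  rcases le_total τ (1-τ) with hm | hm <;>
    simp only [min_eq_left hm, min_eq_right hm] <;>
    split_ifs with hc hc' hc' <;> nlinarith

lemma dphi_sub_ub {τ : ℝ} (hτ : τ ∈ Set.Ioo (0:ℝ) 1) {c' c : ℝ} (h : c' ≤ c) :
    dphi τ c - dphi τ c' ≤ 2 * max τ (1-τ) * (c - c') := by
  obtain ⟨h0, h1⟩ := hτ
  unfold dphi
  rcases le_total τ (1-τ) with hm | hm <;>
    simp only [max_eq_right hm, max_eq_left hm] <;>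
    split_ifs with hc hc' hc' <;> nlinarith

lemma phiLoss_convex {τ : ℝ} (hτ : τ ∈ Set.Ioo (0:ℝ) 1) (u v : ℝ) :
    phiLoss τ u + dphi τ u * (v - u) ≤ phiLoss τ v := by
  obtain ⟨h0, h1⟩ := hτ
  unfold phiLoss dphi
  split_ifs with hu hv hv
  · nlinarith [sq_nonneg (v-u)]
  · have huv : u*v ≤ 0 := mul_nonpos_of_nonpos_of_nonneg hu (le_of_lt (not_le.mp hv))
    nlinarith [sq_nonneg u, mul_nonneg (le_of_lt h0) (sq_nonneg v), mul_nonneg (by linarith : (0:ℝ) ≤ 1-τ) (sq_nonneg u)]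
  · have huv : u*v ≤ 0 := mul_nonpos_of_nonneg_of_nonpos (le_of_lt (not_le.mp hu)) hv
    nlinarith [sq_nonneg v, mul_nonneg (by linarith : (0:ℝ) ≤ 1-τ) (sq_nonneg v), mul_nonneg (le_of_lt h0) (sq_nonneg u)]
  · nlinarith [sq_nonneg (v-u)]

noncomputable def Jfun (τ : ℝ) (ν : Measure ℝ) (b : ℝ) : ℝ := ∫ y, dphi τ (y - b) ∂ν

noncomputable def expSel (τ : ℝ) (ν : Measure ℝ) : ℝ := sInf {x | Jfun τ ν x ≤ 0}

section Integrability

variable {τ : ℝ} {ν : Measure ℝ} [IsProbabilityMeasure ν]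

lemma int_sq_int_abs (Hsq : Integrable (fun y => y^2) ν) : Integrable (fun y : ℝ => |y|) ν := by
  refine Integrable.mono' (g := fun y => 1 + y^2) ((integrable_const 1).add Hsq)
    (measurable_id.abs.aestronglyMeasurable) (Filter.Eventually.of_forall fun y => ?_)
  rw [Real.norm_eq_abs, abs_abs]
  show |y| ≤ 1 + y^2
  nlinarith [sq_nonneg (|y| - 1), sq_abs y, abs_nonneg y]

lemma int_dphi (hτ : τ ∈ Set.Ioo (0:ℝ) 1) (Hsq : Integrable (fun y => y^2) ν) (b : ℝ) :
    Integrable (fun y => dphi τ (y - b)) ν := by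
  refine Integrable.mono' (g := fun y => 2 * |y| + 2 * |b|)
    (((int_sq_int_abs Hsq).const_mul 2).add (integrable_const _)) ?_
    (Filter.Eventually.of_forall fun y => ?_)
  · exact ((measurable_dphi τ).comp (by fun_prop)).aestronglyMeasurable
  · rw [Real.norm_eq_abs]
    have htri : |y - b| ≤ |y| + |b| := by
      rw [sub_eq_add_neg]; exact (abs_add_le y (-b)).trans (by rw [abs_neg])
    calc |dphi τ (y - b)| ≤ 2 * |y - b| := abs_dphi_le hτ _
    _ ≤ 2 * (|y| + |b|) := by linarith
    _ = 2 * |y| + 2 * |b| := by ring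

lemma int_phiLoss (hτ : τ ∈ Set.Ioo (0:ℝ) 1) (Hsq : Integrable (fun y => y^2) ν) (b : ℝ) :
    Integrable (fun y => phiLoss τ (y - b)) ν := by
  refine Integrable.mono' (g := fun y => 2*y^2 + 2*b^2)
    ((Hsq.const_mul 2).add (integrable_const _)) ?_
    (Filter.Eventually.of_forall fun y => ?_)
  · exact ((measurable_phiLoss τ).comp (by fun_prop)).aestronglyMeasurable
  · rw [Real.norm_eq_abs]
    calc |phiLoss τ (y - b)| ≤ (y-b)^2 := abs_phiLoss_le hτ _
    _ ≤ 2*y^2 + 2*b^2 := by nlinarith [sq_nonneg (y+b)]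

end Integrability

section Root

variable {τ : ℝ} {ν : Measure ℝ} [IsProbabilityMeasure ν]

lemma Jfun_sub_lb (hτ : τ ∈ Set.Ioo (0:ℝ) 1) (Hsq : Integrable (fun y => y^2) ν)
    {b b' : ℝ} (h : b ≤ b') :
    2 * min τ (1-τ) * (b' - b) ≤ Jfun τ ν b - Jfun τ ν b' := by
  rw [Jfun, Jfun, ← integral_sub (int_dphi hτ Hsq b) (int_dphi hτ Hsq b')]
  have := integral_mono (μ := ν) (f := fun _ => 2 * min τ (1-τ) * (b' - b))
    (g := fun y => dphi τ (y - b) - dphi τ (y - b')) (integrable_const _)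
    ((int_dphi hτ Hsq b).sub (int_dphi hτ Hsq b'))
    (fun y => by
      have := dphi_sub_lb hτ (c' := y - b') (c := y - b) (by linarith)
      simpa [show y - b - (y - b') = b' - b by ring] using this)
  simpa using this

lemma Jfun_sub_ub (hτ : τ ∈ Set.Ioo (0:ℝ) 1) (Hsq : Integrable (fun y => y^2) ν)
    {b b' : ℝ} (h : b ≤ b') :
    Jfun τ ν b - Jfun τ ν b' ≤ 2 * max τ (1-τ) * (b' - b) := by
  rw [Jfun, Jfun, ← integral_sub (int_dphi hτ Hsq b) (int_dphi hτ Hsq b')]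
  have := integral_mono (μ := ν) (g := fun _ => 2 * max τ (1-τ) * (b' - b))
    (f := fun y => dphi τ (y - b) - dphi τ (y - b'))
    ((int_dphi hτ Hsq b).sub (int_dphi hτ Hsq b')) (integrable_const _)
    (fun y => by
      have := dphi_sub_ub hτ (c' := y - b') (c := y - b) (by linarith)
      simpa [show y - b - (y - b') = b' - b by ring] using this)
  simpa using this

lemma Jfun_antitone (hτ : τ ∈ Set.Ioo (0:ℝ) 1) (Hsq : Integrable (fun y => y^2) ν) :
    Antitone (Jfun τ ν) := by
  intro b b' h
  have := Jfun_sub_lb hτ Hsq h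
  have hm : (0:ℝ) < min τ (1-τ) := lt_min hτ.1 (by linarith [hτ.2])
  nlinarith

/-- The key inequality: `D b ≤ D a - (b-a) * J b`. -/
lemma D_le (hτ : τ ∈ Set.Ioo (0:ℝ) 1) (Hsq : Integrable (fun y => y^2) ν) (a b : ℝ) :
    ∫ y, phiLoss τ (y - b) ∂ν ≤ ∫ y, phiLoss τ (y - a) ∂ν - (b - a) * Jfun τ ν b := by
  have hmono := integral_mono (μ := ν)
    (f := fun y => phiLoss τ (y - b) + dphi τ (y - b) * (b - a))
    (g := fun y => phiLoss τ (y - a))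
    ((int_phiLoss hτ Hsq b).add ((int_dphi hτ Hsq b).mul_const _))
    (int_phiLoss hτ Hsq a)
    (fun y => by
      have := phiLoss_convex hτ (y - b) (y - a)
      simpa [show y - a - (y - b) = b - a by ring] using this)
  rw [integral_add (int_phiLoss hτ Hsq b) ((int_dphi hτ Hsq b).mul_const _),
    integral_mul_const] at hmono
  rw [Jfun]
  linarith

lemma Jfun_eq_zero_of_isExpectile (hτ : τ ∈ Set.Ioo (0:ℝ) 1)
    (Hsq : Integrable (fun y => y^2) ν) {a : ℝ} (ha : IsExpectile τ ν a) :
    Jfun τ ν a = 0 := by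
  by_contra hJ
  set M := max τ (1-τ) with hM
  have hM0 : (0:ℝ) < M := lt_max_of_lt_left hτ.1
  set Ja := Jfun τ ν a with hJa
  set b := a + Ja / (4*M) with hb
  have hbne : b ≠ a := by
    simp only [hb, ne_eq, add_eq_left, div_eq_zero_iff]
    push_neg
    exact ⟨hJ, by positivity⟩
  have hdiff : |Jfun τ ν a - Jfun τ ν b| ≤ |Ja| / 2 := by
    rcases le_total a b with h | h
    · have h1 := Jfun_sub_lb hτ Hsq h
      have h2 := Jfun_sub_ub hτ Hsq h
      have hm : (0:ℝ) ≤ min τ (1-τ) := le_of_lt (lt_min hτ.1 (by linarith [hτ.2]))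
      have hba : b - a = Ja / (4*M) := by rw [hb]; ring
      rw [abs_le]
      constructor
      · nlinarith [mul_nonneg hm (sub_nonneg.mpr h), abs_nonneg Ja]
      · have : Jfun τ ν a - Jfun τ ν b ≤ 2 * M * (Ja / (4*M)) := by rw [← hba]; exact h2
        have h4 : 2 * M * (Ja / (4*M)) = Ja / 2 := by field_simp; ring
        have h5 : Ja / 2 ≤ |Ja| / 2 := by
          have := le_abs_self Ja; linarith
        linarith
    · have h2 := Jfun_sub_ub hτ Hsq h
      have hab : a - b = -Ja / (4*M) := by rw [hb]; ring
      have h1 := Jfun_sub_lb hτ Hsq h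
      have hm : (0:ℝ) ≤ min τ (1-τ) := le_of_lt (lt_min hτ.1 (by linarith [hτ.2]))
      rw [abs_le]
      constructor
      · have : Jfun τ ν b - Jfun τ ν a ≤ 2 * M * (-Ja / (4*M)) := by rw [← hab]; exact h2
        have h4 : 2 * M * (-Ja / (4*M)) = -Ja / 2 := by field_simp; ring
        have h5 : -Ja / 2 ≤ |Ja| / 2 := by
          have := neg_le_abs Ja; linarith
        linarith
      · nlinarith [mul_nonneg hm (sub_nonneg.mpr h), abs_nonneg Ja]
  have hprod : 0 < Ja * Jfun τ ν b := by
    have habs : |Ja| ^ 2 = Ja ^ 2 := sq_abs Ja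
    have h0 : 0 < |Ja| := abs_pos.mpr hJ
    set dd := Jfun τ ν a - Jfun τ ν b with hdd
    have h1 : Ja * dd ≤ |Ja| * |dd| := (le_abs_self _).trans (le_of_eq (abs_mul _ _))
    have h2 : |Ja| * |dd| ≤ |Ja| * (|Ja| / 2) := mul_le_mul_of_nonneg_left hdiff (abs_nonneg _)
    have h3 : Ja * Jfun τ ν b = Ja ^ 2 - Ja * dd := by rw [hdd, hJa]; ring
    nlinarith
  have hkey := D_le hτ Hsq a b
  have hlt := ha b hbne
  have hba : b - a = Ja / (4*M) := by rw [hb]; ring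
  have : (b - a) * Jfun τ ν b > 0 := by
    rw [hba]
    have : Ja / (4*M) * Jfun τ ν b = (Ja * Jfun τ ν b) / (4*M) := by ring
    rw [this]
    positivity
  linarith

lemma expSel_eq_of_isExpectile (hτ : τ ∈ Set.Ioo (0:ℝ) 1)
    (Hsq : Integrable (fun y => y^2) ν) {a : ℝ} (ha : IsExpectile τ ν a) :
    expSel τ ν = a := by
  have hJ := Jfun_eq_zero_of_isExpectile hτ Hsq ha
  have hm : (0:ℝ) < min τ (1-τ) := lt_min hτ.1 (by linarith [hτ.2])
  have hleast : IsLeast {x | Jfun τ ν x ≤ 0} a := by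
    constructor
    · simp [hJ]
    · intro x hx
      by_contra hax
      push_neg at hax
      have := Jfun_sub_lb hτ Hsq (le_of_lt hax)
      rw [hJ] at this
      have : 0 < Jfun τ ν x := by nlinarith
      simp only [Set.mem_setOf_eq] at hx
      linarith
  exact hleast.csInf_eq

end Root

section Lipschitz

variable {τ : ℝ} {ν : Measure ℝ} [IsProbabilityMeasure ν]

lemma dphi_lipschitz (hτ : τ ∈ Set.Ioo (0:ℝ) 1) (c c' : ℝ) :
    |dphi τ c - dphi τ c'| ≤ 2 * max τ (1-τ) * |c - c'| := by
  have hM : (0:ℝ) < max τ (1-τ) := lt_max_of_lt_left hτ.1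
  rcases le_total c' c with h | h
  · have h1 := dphi_sub_lb hτ h
    have h2 := dphi_sub_ub hτ h
    have hm : (0:ℝ) ≤ min τ (1-τ) := le_of_lt (lt_min hτ.1 (by linarith [hτ.2]))
    rw [abs_of_nonneg (by nlinarith [mul_nonneg hm (sub_nonneg.mpr h)]),
      abs_of_nonneg (sub_nonneg.mpr h)]
    exact h2
  · have h1 := dphi_sub_lb hτ h
    have h2 := dphi_sub_ub hτ h
    have hm : (0:ℝ) ≤ min τ (1-τ) := le_of_lt (lt_min hτ.1 (by linarith [hτ.2]))
    rw [abs_of_nonpos (by nlinarith [mul_nonneg hm (sub_nonneg.mpr h)]),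
      abs_of_nonpos (sub_nonpos.mpr h)]
    linarith

lemma int_dphi_shift (hτ : τ ∈ Set.Ioo (0:ℝ) 1) {b : ℝ}
    (h : Integrable (fun y => dphi τ (y - b)) ν) (b' : ℝ) :
    Integrable (fun y => dphi τ (y - b')) ν := by
  refine Integrable.mono' (g := fun y => |dphi τ (y - b)| + 2 * max τ (1-τ) * |b - b'|)
    (h.abs.add (integrable_const _))
    (((measurable_dphi τ).comp (by fun_prop)).aestronglyMeasurable)
    (Filter.Eventually.of_forall fun y => ?_)
  rw [Real.norm_eq_abs]
  show |dphi τ (y - b')| ≤ |dphi τ (y - b)| + 2 * max τ (1-τ) * |b - b'|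
  have := dphi_lipschitz hτ (y - b') (y - b)
  have h2 : |dphi τ (y - b')| - |dphi τ (y - b)| ≤ |dphi τ (y - b') - dphi τ (y - b)| :=
    abs_sub_abs_le_abs_sub _ _
  have h3 : y - b' - (y - b) = b - b' := by ring
  rw [h3] at this
  linarith

lemma int_dphi_iff (hτ : τ ∈ Set.Ioo (0:ℝ) 1) (b : ℝ) :
    Integrable (fun y => dphi τ (y - b)) ν ↔ Integrable (fun y => dphi τ y) ν := by
  constructor
  · intro h
    simpa using int_dphi_shift hτ h 0
  · intro h
    exact int_dphi_shift hτ (b := 0) (by simpa using h) b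

lemma Jfun_sub_lb' (hτ : τ ∈ Set.Ioo (0:ℝ) 1) (hInt : Integrable (fun y => dphi τ y) ν)
    {b b' : ℝ} (h : b ≤ b') :
    2 * min τ (1-τ) * (b' - b) ≤ Jfun τ ν b - Jfun τ ν b' := by
  have hI : ∀ c, Integrable (fun y => dphi τ (y - c)) ν := fun c => (int_dphi_iff hτ c).2 hInt
  rw [Jfun, Jfun, ← integral_sub (hI b) (hI b')]
  have := integral_mono (μ := ν) (f := fun _ => 2 * min τ (1-τ) * (b' - b))
    (g := fun y => dphi τ (y - b) - dphi τ (y - b')) (integrable_const _)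
    ((hI b).sub (hI b'))
    (fun y => by
      have := dphi_sub_lb hτ (c' := y - b') (c := y - b) (by linarith)
      simpa [show y - b - (y - b') = b' - b by ring] using this)
  simpa using this

lemma Jfun_lipschitz' (hτ : τ ∈ Set.Ioo (0:ℝ) 1) (hInt : Integrable (fun y => dphi τ y) ν)
    (b b' : ℝ) : |Jfun τ ν b - Jfun τ ν b'| ≤ 2 * max τ (1-τ) * |b - b'| := by
  have hI : ∀ c, Integrable (fun y => dphi τ (y - c)) ν := fun c => (int_dphi_iff hτ c).2 hInt
  rw [Jfun, Jfun, ← integral_sub (hI b) (hI b')]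
  calc |∫ y, (dphi τ (y - b) - dphi τ (y - b')) ∂ν|
      ≤ ∫ y, |dphi τ (y - b) - dphi τ (y - b')| ∂ν := by
        rw [← Real.norm_eq_abs]
        refine (norm_integral_le_integral_norm _).trans (le_of_eq ?_)
        simp [Real.norm_eq_abs]
    _ ≤ ∫ _, 2 * max τ (1-τ) * |b' - b| ∂ν := by
        refine integral_mono (((hI b).sub (hI b')).abs) (integrable_const _) (fun y => ?_)
        have := dphi_lipschitz hτ (y - b) (y - b')
        simpa [show y - b - (y - b') = b' - b by ring] using this
    _ = 2 * max τ (1-τ) * |b - b'| := by rw [integral_const]; simp [abs_sub_comm b' b]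

lemma continuous_Jfun' (hτ : τ ∈ Set.Ioo (0:ℝ) 1) (hInt : Integrable (fun y => dphi τ y) ν) :
    Continuous (Jfun τ ν) := by
  have hM : (0:ℝ) ≤ 2 * max τ (1-τ) := by
    have := lt_max_of_lt_left (c := 1-τ) hτ.1
    linarith
  refine (LipschitzWith.of_dist_le_mul (K := (2 * max τ (1-τ)).toNNReal)
    (f := Jfun τ ν) fun b b' => ?_).continuous
  rw [Real.dist_eq, Real.dist_eq, Real.coe_toNNReal _ hM]
  exact Jfun_lipschitz' hτ hInt b b'

lemma expSel_le_iff (hτ : τ ∈ Set.Ioo (0:ℝ) 1) (hInt : Integrable (fun y => dphi τ y) ν)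
    (c : ℝ) : expSel τ ν ≤ c ↔ Jfun τ ν c ≤ 0 := by
  have hm : (0:ℝ) < min τ (1-τ) := lt_min hτ.1 (by linarith [hτ.2])
  set S := {x | Jfun τ ν x ≤ 0} with hS
  set J0 := Jfun τ ν 0 with hJ0
  have hne : S.Nonempty := by
    rcases le_or_gt J0 0 with h | h
    · exact ⟨0, h⟩
    · refine ⟨J0 / (2 * min τ (1-τ)), ?_⟩
      have hx : (0:ℝ) ≤ J0 / (2 * min τ (1-τ)) := by positivity
      have := Jfun_sub_lb' hτ hInt hx
      show Jfun τ ν (J0 / (2 * min τ (1-τ))) ≤ 0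
      have heq : 2 * min τ (1-τ) * (J0 / (2 * min τ (1-τ)) - 0) = J0 := by
        field_simp; ring
      rw [heq] at this
      rw [← hJ0] at this
      linarith
  have hbdd : BddBelow S := by
    refine ⟨min 0 (J0 / (2 * min τ (1-τ))), fun x hx => ?_⟩
    by_contra hxL
    push_neg at hxL
    have hx0 : x ≤ 0 := le_of_lt (lt_of_lt_of_le hxL (min_le_left _ _))
    have := Jfun_sub_lb' hτ hInt hx0
    rw [← hJ0] at this
    have hx2 : x < J0 / (2 * min τ (1-τ)) := lt_of_lt_of_le hxL (min_le_right _ _)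
    have hx3 : 2 * min τ (1-τ) * x < J0 := by
      rw [lt_div_iff₀ (by positivity)] at hx2
      linarith [hx2]
    simp only [hS, Set.mem_setOf_eq] at hx
    nlinarith
  have hclosed : IsClosed S := by
    have : S = (Jfun τ ν) ⁻¹' (Set.Iic 0) := rfl
    rw [this]
    exact IsClosed.preimage (continuous_Jfun' hτ hInt) isClosed_Iic
  constructor
  · intro h
    have hmem : sInf S ∈ S := hclosed.csInf_mem hne hbdd
    simp only [hS, Set.mem_setOf_eq] at hmem ⊢
    have hmono := Jfun_sub_lb' hτ hInt h
    have hm2 : 0 ≤ 2 * min τ (1-τ) * (c - expSel τ ν) := by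
      have : 0 ≤ c - expSel τ ν := by linarith
      positivity
    rw [expSel] at hmono hm2
    linarith
  · intro h
    exact csInf_le hbdd h

lemma Jfun_of_not_integrable (hτ : τ ∈ Set.Ioo (0:ℝ) 1)
    (hInt : ¬ Integrable (fun y => dphi τ y) ν) (b : ℝ) : Jfun τ ν b = 0 := by
  rw [Jfun, integral_undef]
  intro h
  exact hInt ((int_dphi_iff hτ b).1 h)

lemma expSel_of_not_integrable (hτ : τ ∈ Set.Ioo (0:ℝ) 1)
    (hInt : ¬ Integrable (fun y => dphi τ y) ν) : expSel τ ν = 0 := by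
  have hS : {x | Jfun τ ν x ≤ 0} = Set.univ := by
    ext x; simp [Jfun_of_not_integrable hτ hInt x]
  rw [expSel, hS]
  have : ¬ BddBelow (Set.univ : Set ℝ) := by
    rintro ⟨L, hL⟩
    have := hL (Set.mem_univ (L - 1))
    linarith
  rw [csInf_of_not_bddBelow this, Real.sInf_empty]

end Lipschitz

section Meas

variable {τ : ℝ} {Z : Type*} [MeasurableSpace Z]

lemma measurable_expSel (hτ : τ ∈ Set.Ioo (0:ℝ) 1) (κ : ProbabilityTheory.Kernel Z ℝ)
    [ProbabilityTheory.IsMarkovKernel κ] : Measurable (fun z => expSel τ (κ z)) := by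
  apply measurable_of_Iic
  intro c
  have hG : MeasurableSet {z | Integrable (fun y => dphi τ y) (κ z)} := by
    have := ProbabilityTheory.measurableSet_kernel_integrable (κ := κ)
      (f := fun (_ : Z) (y : ℝ) => dphi τ y)
      (((measurable_dphi τ).comp measurable_snd).stronglyMeasurable)
    exact this
  have hJ : Measurable (fun z => Jfun τ (κ z) c) := by
    have := MeasureTheory.StronglyMeasurable.integral_kernel_prod_right' (κ := κ)
      (f := fun q : Z × ℝ => dphi τ (q.2 - c))
      (((measurable_dphi τ).comp (by fun_prop)).stronglyMeasurable)
    exact this.measurable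
  have hset : (fun z => expSel τ (κ z)) ⁻¹' (Set.Iic c) =
      ({z | Integrable (fun y => dphi τ y) (κ z)} ∩ {z | Jfun τ (κ z) c ≤ 0}) ∪
      ({z | Integrable (fun y => dphi τ y) (κ z)}ᶜ ∩ {z | (0:ℝ) ≤ c}) := by
    ext z
    by_cases hz : Integrable (fun y => dphi τ y) (κ z)
    · simp only [Set.mem_preimage, Set.mem_Iic, Set.mem_union, Set.mem_inter_iff,
        Set.mem_setOf_eq, Set.mem_compl_iff, hz, not_true, false_and, or_false, true_and]
      exact expSel_le_iff hτ hz c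
    · simp only [Set.mem_preimage, Set.mem_Iic, Set.mem_union, Set.mem_inter_iff,
        Set.mem_setOf_eq, Set.mem_compl_iff, hz, false_and, false_or, not_false_iff, true_and]
      rw [expSel_of_not_integrable hτ hz]
  rw [hset]
  refine (hG.inter (measurableSet_le hJ measurable_const)).union (hG.compl.inter ?_)
  by_cases h : (0:ℝ) ≤ c <;> simp [h]

end Meas

/-- **Proposition 1**: if `Y ⫫ X | BᵀX`, then the vector of conditional expectiles
`ξ_X = (f_{τ₁}(X), …, f_{τ_k}(X))` is also conditionally independent of `X` given `BᵀX`;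
that is, every dimension-reduction basis `B` for the regression of `Y` on `X` is a
dimension-reduction basis for the regression of `ξ_X` on `X`. -/
theorem statement0
    {Ω : Type*} [mΩ : MeasurableSpace Ω] [StandardBorelSpace Ω] [Nonempty Ω]
    (P : Measure Ω) [IsProbabilityMeasure P]
    {p d k : ℕ}
    (X : Ω → Fin p → ℝ) (hXmeas : Measurable X) (hX2 : MemLp X 2 P)
    (Y : Ω → ℝ) (hYmeas : Measurable Y) (hY2 : MemLp Y 2 P)
    (B : Matrix (Fin p) (Fin d) ℝ) (hBrank : B.rank = d)
    (hm : MeasurableSpace.comap (fun ω => Bᵀ.mulVec (X ω)) inferInstance ≤ mΩ)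
    (hYX : CondIndepFun (MeasurableSpace.comap (fun ω => Bᵀ.mulVec (X ω)) inferInstance) hm
      Y X P)
    (τ : Fin k → ℝ) (hτ : ∀ ℓ, τ ℓ ∈ Set.Ioo (0 : ℝ) 1) (hτmono : StrictMono τ)
    (f : Fin k → (Fin p → ℝ) → ℝ) (hfmeas : ∀ ℓ, Measurable (f ℓ))
    (hexp : ∀ ℓ, ∀ᵐ x ∂(P.map X), IsExpectile (τ ℓ) (condDistrib Y X P x) (f ℓ x)) :
    CondIndepFun (MeasurableSpace.comap (fun ω => Bᵀ.mulVec (X ω)) inferInstance) hm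
      (fun ω => fun ℓ => f ℓ (X ω)) X P := by
  classical
  have hπ : Measurable (fun v : Fin p → ℝ => Bᵀ.mulVec v) := by
    have h := LinearMap.continuous_of_finiteDimensional (Bᵀ.mulVecLin)
    have heq : (fun v : Fin p → ℝ => Bᵀ.mulVec v) = Bᵀ.mulVecLin := by
      funext v; rw [Matrix.mulVecLin_apply]
    rw [heq]; exact h.measurable
  set W : Ω → Fin d → ℝ := fun ω => Bᵀ.mulVec (X ω) with hWdef
  have hW : Measurable W := hπ.comp hXmeas
  set ν' := condDistrib Y W P with hν'def
  set κ := ProbabilityTheory.Kernel.comap ν' (fun v : Fin p → ℝ => Bᵀ.mulVec v) hπ with hκdef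
  -- Claim A: the joint law of (X, Y) disintegrates through κ
  have hmapeq : P.map (fun ω => (X ω, Y ω)) = (P.map X) ⊗ₘ κ := by
    refine ext_of_generate_finite _ generateFrom_prod.symm isPiSystem_prod ?_ ?_
    swap
    · rw [Measure.map_apply (hXmeas.prodMk hYmeas) MeasurableSet.univ,
        Measure.compProd_apply_univ, Measure.map_apply hXmeas MeasurableSet.univ]
      simp
    rintro u ⟨A, hA, t, ht, rfl⟩
    simp only [Set.mem_setOf_eq] at hA ht
    have hAX : MeasurableSet (X ⁻¹' A) := hXmeas hA
    have hYt : MeasurableSet (Y ⁻¹' t) := hYmeas ht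
    have hpre : (fun ω => (X ω, Y ω)) ⁻¹' (A ×ˢ t) = X ⁻¹' A ∩ Y ⁻¹' t := by
      ext ω; simp [Set.mem_prod]
    have hg : Measurable (fun x : Fin p → ℝ => ν' (Bᵀ.mulVec x) t) :=
      (ProbabilityTheory.Kernel.measurable_coe ν' ht).comp hπ
    have hκx : ∀ x, κ x t = ν' (Bᵀ.mulVec x) t := fun x => by
      rw [hκdef, ProbabilityTheory.Kernel.comap_apply]
    rw [Measure.map_apply (hXmeas.prodMk hYmeas) (hA.prod ht), hpre,
      Measure.compProd_apply_prod hA ht]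
    simp_rw [hκx]
    rw [setLIntegral_map hA hg hXmeas]
    -- now an equality of `ℝ≥0∞`; reduce to real numbers
    have hmeasF : Measurable (fun ω => ν' (W ω) t) :=
      (ProbabilityTheory.Kernel.measurable_coe ν' ht).comp hW
    have hne1 : P (X ⁻¹' A ∩ Y ⁻¹' t) ≠ ⊤ := measure_ne_top _ _
    have hle : ∫⁻ ω in X ⁻¹' A, ν' (W ω) t ∂P ≤ P (X ⁻¹' A) := by
      calc ∫⁻ ω in X ⁻¹' A, ν' (W ω) t ∂P ≤ ∫⁻ _ in X ⁻¹' A, 1 ∂P :=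
            lintegral_mono fun ω => prob_le_one
        _ = P (X ⁻¹' A) := by simp
    have hne2 : ∫⁻ ω in X ⁻¹' A, ν' (W ω) t ∂P ≠ ⊤ :=
      ne_top_of_le_ne_top (measure_ne_top _ _) hle
    rw [← ENNReal.toReal_eq_toReal_iff' hne1 hne2]
    -- abbreviations
    have h1 : (fun ω => (ν' (W ω) t).toReal)
        =ᵐ[P] P⟦Y ⁻¹' t|MeasurableSpace.comap W inferInstance⟧ :=
      condDistrib_ae_eq_condExp hW hYmeas ht
    have hg1m : AEStronglyMeasurable ((X ⁻¹' A).indicator (fun _ => (1:ℝ))) P :=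
      (stronglyMeasurable_const.indicator hAX).aestronglyMeasurable
    have hintg1 : Integrable ((X ⁻¹' A).indicator (fun _ => (1:ℝ))) P :=
      (integrable_const _).indicator hAX
    have hintf2g1 : Integrable (P⟦Y ⁻¹' t|MeasurableSpace.comap W inferInstance⟧ *
        (X ⁻¹' A).indicator (fun _ => (1:ℝ))) P := by
      have hbd : ∀ ω, ‖((X ⁻¹' A).indicator (fun _ => (1:ℝ))) ω‖ ≤ 1 := by
        intro ω
        by_cases hmem : ω ∈ X ⁻¹' A <;> simp [Set.indicator_apply, hmem]
      have hb : Integrable (fun ω => ((X ⁻¹' A).indicator (fun _ => (1:ℝ))) ω *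
          (P⟦Y ⁻¹' t|MeasurableSpace.comap W inferInstance⟧) ω) P :=
        Integrable.bdd_mul (c := 1) integrable_condExp hg1m (Filter.Eventually.of_forall hbd)
      exact hb.congr (Filter.Eventually.of_forall fun ω => mul_comm _ _)
    have hmulce : P[P⟦Y ⁻¹' t|MeasurableSpace.comap W inferInstance⟧ *
          (X ⁻¹' A).indicator (fun _ => (1:ℝ))|MeasurableSpace.comap W inferInstance]
        =ᵐ[P] P⟦Y ⁻¹' t|MeasurableSpace.comap W inferInstance⟧ *
          P⟦X ⁻¹' A|MeasurableSpace.comap W inferInstance⟧ :=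
      condExp_mul_of_stronglyMeasurable_left stronglyMeasurable_condExp hintf2g1 hintg1
    have hci := (condIndepFun_iff_condExp_inter_preimage_eq_mul hYmeas hXmeas).1 hYX t A ht hA
    -- left-hand side
    have hLHS : (P (X ⁻¹' A ∩ Y ⁻¹' t)).toReal =
        ∫ ω, (P⟦Y ⁻¹' t|MeasurableSpace.comap W inferInstance⟧ *
          P⟦X ⁻¹' A|MeasurableSpace.comap W inferInstance⟧) ω ∂P := by
      rw [show (P (X ⁻¹' A ∩ Y ⁻¹' t)).toReal = P.real (X ⁻¹' A ∩ Y ⁻¹' t) from rfl,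
        ← integral_indicator_one (hAX.inter hYt)]
      rw [show ((X ⁻¹' A ∩ Y ⁻¹' t).indicator (1 : Ω → ℝ)) =
        (X ⁻¹' A ∩ Y ⁻¹' t).indicator (fun _ => (1:ℝ)) from rfl]
      rw [← integral_condExp hm (f := (X ⁻¹' A ∩ Y ⁻¹' t).indicator (fun _ => (1:ℝ)))]
      refine integral_congr_ae ?_
      have hcomm : X ⁻¹' A ∩ Y ⁻¹' t = Y ⁻¹' t ∩ X ⁻¹' A := Set.inter_comm _ _
      rw [hcomm]
      refine hci.trans ?_
      exact Filter.Eventually.of_forall fun ω => rfl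
    -- right-hand side
    have hRHS : (∫⁻ ω in X ⁻¹' A, ν' (W ω) t ∂P).toReal =
        ∫ ω, (P⟦Y ⁻¹' t|MeasurableSpace.comap W inferInstance⟧ *
          P⟦X ⁻¹' A|MeasurableSpace.comap W inferInstance⟧) ω ∂P := by
      have hint_toReal : ∫ ω in X ⁻¹' A, (ν' (W ω) t).toReal ∂P =
          (∫⁻ ω in X ⁻¹' A, ν' (W ω) t ∂P).toReal := by
        refine integral_toReal (hmeasF.aemeasurable.restrict) ?_
        exact Filter.Eventually.of_forall fun ω => measure_lt_top _ _
      rw [← hint_toReal, ← integral_indicator hAX]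
      have hstep : ∫ ω, (X ⁻¹' A).indicator (fun a => (ν' (W a) t).toReal) ω ∂P =
          ∫ ω, (P⟦Y ⁻¹' t|MeasurableSpace.comap W inferInstance⟧ *
            (X ⁻¹' A).indicator (fun _ => (1:ℝ))) ω ∂P := by
        refine integral_congr_ae ?_
        filter_upwards [h1] with ω hω
        by_cases hmem : ω ∈ X ⁻¹' A <;>
          simp [Set.indicator_apply, hmem, Pi.mul_apply, hω]
      rw [hstep, ← integral_condExp hm (f := P⟦Y ⁻¹' t|MeasurableSpace.comap W inferInstance⟧ *
        (X ⁻¹' A).indicator (fun _ => (1:ℝ)))]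
      exact integral_congr_ae hmulce
    rw [hLHS, hRHS]
  have hAE : ∀ᵐ x ∂(P.map X), κ x = condDistrib Y X P x :=
    (condDistrib_ae_eq_of_measure_eq_compProd X hYmeas.aemeasurable hmapeq).mono fun x h => h.symm
  have hsqY : Integrable (fun q : (Fin p → ℝ) × ℝ => q.2 ^ 2) (P.map fun ω => (X ω, Y ω)) := by
    rw [integrable_map_measure (measurable_snd.pow_const 2).aestronglyMeasurable
      (hXmeas.prodMk hYmeas).aemeasurable]
    exact hY2.integrable_sq
  have hsq : ∀ᵐ x ∂(P.map X), Integrable (fun y => y ^ 2) (condDistrib Y X P x) :=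
    Integrable.condDistrib_ae_map hYmeas.aemeasurable hsqY
  have hfac0 : ∀ᵐ x ∂(P.map X), ∀ ℓ, f ℓ x = expSel (τ ℓ) (ν' (Bᵀ.mulVec x)) := by
    filter_upwards [hAE, hsq, ae_all_iff.2 hexp] with x hκx hsqx hexpx
    intro ℓ
    have hcd : condDistrib Y X P x = ν' (Bᵀ.mulVec x) := by
      rw [← hκx, hκdef, ProbabilityTheory.Kernel.comap_apply]
    rw [hcd] at hsqx hexpx
    exact (expSel_eq_of_isExpectile (hτ ℓ) hsqx (hexpx ℓ)).symm
  have hfac : ∀ᵐ ω ∂P, ∀ ℓ, f ℓ (X ω) = expSel (τ ℓ) (ν' (W ω)) :=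
    ae_of_ae_map hXmeas.aemeasurable hfac0
  set H : (Fin d → ℝ) → (Fin k → ℝ) := fun z ℓ => expSel (τ ℓ) (ν' z) with hHdef
  have hH : Measurable H :=
    measurable_pi_lambda _ (fun ℓ => measurable_expSel (hτ ℓ) ν')
  have hξ : (fun ω => fun ℓ => f ℓ (X ω)) =ᵐ[P] fun ω => H (W ω) := by
    filter_upwards [hfac] with ω hω
    funext ℓ
    exact hω ℓ
  have hξmeas : Measurable (fun ω => fun ℓ => f ℓ (X ω)) :=
    measurable_pi_lambda _ (fun ℓ => (hfmeas ℓ).comp hXmeas)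
  rw [condIndepFun_iff_condExp_inter_preimage_eq_mul hξmeas hXmeas]
  intro s t hs ht
  set A := W ⁻¹' (H ⁻¹' s) with hAdef
  have hAm' : MeasurableSet[MeasurableSpace.comap W inferInstance] A := ⟨H ⁻¹' s, hH hs, rfl⟩
  have hAmΩ : MeasurableSet A := hm _ hAm'
  have hXt : MeasurableSet (X ⁻¹' t) := hXmeas ht
  -- the indicator of `ξ ⁻¹' s` agrees a.e. with the indicator of `A`
  have hind : ∀ (C : Set Ω),
      ((fun ω => fun ℓ => f ℓ (X ω)) ⁻¹' s ∩ C).indicator (fun _ => (1:ℝ))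
        =ᵐ[P] (A ∩ C).indicator (fun _ => (1:ℝ)) := by
    intro C
    filter_upwards [hξ] with ω hω
    have hmem : ω ∈ (fun ω => fun ℓ => f ℓ (X ω)) ⁻¹' s ↔ ω ∈ A := by
      simp only [Set.mem_preimage, hAdef, hω]
    by_cases hC : ω ∈ C
    · by_cases hA : ω ∈ A
      · rw [Set.indicator_of_mem (Set.mem_inter (hmem.2 hA) hC), Set.indicator_of_mem (Set.mem_inter hA hC)]
      · rw [Set.indicator_of_notMem (fun h => hA (hmem.1 h.1)),
          Set.indicator_of_notMem (fun h => hA h.1)]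
    · rw [Set.indicator_of_notMem (fun h => hC h.2), Set.indicator_of_notMem (fun h => hC h.2)]
  have hApre : ((fun ω => fun ℓ => f ℓ (X ω)) ⁻¹' s).indicator (fun _ => (1:ℝ))
      =ᵐ[P] A.indicator (fun _ => (1:ℝ)) := by
    have := hind Set.univ
    simpa [Set.inter_univ] using this
  -- compute the conditional expectation of the indicator of `A ∩ X ⁻¹' t`
  have hsmA : StronglyMeasurable[MeasurableSpace.comap W inferInstance]
      (A.indicator (fun _ => (1:ℝ))) := stronglyMeasurable_const.indicator hAm'
  have hintA : Integrable (A.indicator (fun _ => (1:ℝ))) P :=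
    (integrable_const _).indicator hAmΩ
  have hintt : Integrable ((X ⁻¹' t).indicator (fun _ => (1:ℝ))) P :=
    (integrable_const _).indicator hXt
  have hprod : (A ∩ X ⁻¹' t).indicator (fun _ => (1:ℝ)) =
      A.indicator (fun _ => (1:ℝ)) * (X ⁻¹' t).indicator (fun _ => (1:ℝ)) := by
    funext ω
    by_cases hA : ω ∈ A <;> by_cases hC : ω ∈ X ⁻¹' t <;>
      simp [Set.indicator_apply, hA, hC, Set.mem_inter_iff]
  have hmulint : Integrable (A.indicator (fun _ => (1:ℝ)) * (X ⁻¹' t).indicator (fun _ => (1:ℝ))) P := by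
    rw [← hprod]
    exact (integrable_const _).indicator (hAmΩ.inter hXt)
  have hcemul : P[A.indicator (fun _ => (1:ℝ)) * (X ⁻¹' t).indicator (fun _ => (1:ℝ))|
        MeasurableSpace.comap W inferInstance]
      =ᵐ[P] A.indicator (fun _ => (1:ℝ)) *
        P[(X ⁻¹' t).indicator (fun _ => (1:ℝ))|MeasurableSpace.comap W inferInstance] :=
    condExp_mul_of_stronglyMeasurable_left hsmA hmulint hintt
  have hceA : P[A.indicator (fun _ => (1:ℝ))|MeasurableSpace.comap W inferInstance]
      = A.indicator (fun _ => (1:ℝ)) :=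
    condExp_of_stronglyMeasurable hm hsmA hintA
  calc P⟦(fun ω => fun ℓ => f ℓ (X ω)) ⁻¹' s ∩ X ⁻¹' t|MeasurableSpace.comap W inferInstance⟧
      =ᵐ[P] P[(A ∩ X ⁻¹' t).indicator (fun _ => (1:ℝ))|MeasurableSpace.comap W inferInstance] :=
        condExp_congr_ae (hind (X ⁻¹' t))
    _ =ᵐ[P] A.indicator (fun _ => (1:ℝ)) *
        P[(X ⁻¹' t).indicator (fun _ => (1:ℝ))|MeasurableSpace.comap W inferInstance] := by
        rw [hprod]; exact hcemul
    _ =ᵐ[P] fun ω => (P⟦(fun ω => fun ℓ => f ℓ (X ω)) ⁻¹' s|MeasurableSpace.comap W inferInstance⟧) ω *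
        (P⟦X ⁻¹' t|MeasurableSpace.comap W inferInstance⟧) ω := by
        have h1 : P⟦(fun ω => fun ℓ => f ℓ (X ω)) ⁻¹' s|MeasurableSpace.comap W inferInstance⟧
            =ᵐ[P] A.indicator (fun _ => (1:ℝ)) := by
          refine (condExp_congr_ae hApre).trans ?_
          rw [hceA]
        filter_upwards [h1] with ω hω
        simp only [Pi.mul_apply, hω]
end

section
/- Assume E[X] = 0, Σ positive definite, the LCM assumption E[X | σ(BᵀX)] = P_Σ(B) X a.s., and the CCV assumption that Var(X | σ(BᵀX)) is almost surely a nonrandom matrix. Then E[XXᵀ − Σ | σ(BᵀX)] = P_Σ(B) (XXᵀ − Σ) P_Σ(B)ᵀ almost surely, where P_Σ(B) = Σ B (BᵀΣB)⁻¹ Bᵀ. -/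
open MeasureTheory ProbabilityTheory Matrix

/-- Equation (33): assume `E[X] = 0`, `Sigma` positive definite, the LCM assumption
`E[X | σ(BᵀX)] = P_Σ(B) X` a.s., and the CCV assumption that `Var(X | σ(BᵀX))` is almost
surely a nonrandom matrix. Then
`E[XXᵀ − Sigma | σ(BᵀX)] = P_Σ(B) (XXᵀ − Sigma) P_Σ(B)ᵀ` almost surely, where
`P_Σ(B) = Sigma B (Bᵀ Sigma B)⁻¹ Bᵀ`. -/
theorem statement10
    {Ω : Type*} [mΩ : MeasurableSpace Ω]
    (P : Measure Ω) [IsProbabilityMeasure P]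
    {p d : ℕ}
    (X : Ω → Fin p → ℝ) (hXmeas : Measurable X) (hX2 : MemLp X 2 P)
    (hX0 : ∫ ω, X ω ∂P = 0)
    (Sig : Matrix (Fin p) (Fin p) ℝ)
    (hSig : ∀ i j, Sig i j = ∫ ω, X ω i * X ω j ∂P)
    (hSigpos : Sig.PosDef)
    (B : Matrix (Fin p) (Fin d) ℝ) (hBrank : B.rank = d)
    -- LCM assumption with `P_Σ(B) = Sigma B (Bᵀ Sigma B)⁻¹ Bᵀ`
    (hLCM : condExp (MeasurableSpace.comap (fun ω' => Bᵀ.mulVec (X ω')) inferInstance) P X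
      =ᵐ[P] fun ω => (Sig * B * (Bᵀ * Sig * B)⁻¹ * Bᵀ).mulVec (X ω))
    -- CCV assumption: the conditional variance is a.s. equal to a nonrandom matrix
    (hCCV : ∃ C : Matrix (Fin p) (Fin p) ℝ, (fun ω =>
        condExp (MeasurableSpace.comap (fun ω' => Bᵀ.mulVec (X ω')) inferInstance) P
          (fun ω' => fun i j => X ω' i * X ω' j) ω
        - fun i j =>
            condExp (MeasurableSpace.comap (fun ω' => Bᵀ.mulVec (X ω')) inferInstance) P X ω i *
            condExp (MeasurableSpace.comap (fun ω' => Bᵀ.mulVec (X ω')) inferInstance) P X ω j)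
      =ᵐ[P] fun _ => fun i j => C i j) :
    condExp (MeasurableSpace.comap (fun ω' => Bᵀ.mulVec (X ω')) inferInstance) P
        (fun ω => fun i j => X ω i * X ω j - Sig i j)
      =ᵐ[P] fun ω => fun i j =>
        ((Sig * B * (Bᵀ * Sig * B)⁻¹ * Bᵀ) *
          (Matrix.of (fun i' j' => X ω i' * X ω j') - Sig) *
          (Sig * B * (Bᵀ * Sig * B)⁻¹ * Bᵀ)ᵀ) i j := by
  classical
  set Q : Matrix (Fin p) (Fin p) ℝ := Sig * B * (Bᵀ * Sig * B)⁻¹ * Bᵀ with hQdef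
  -- measurability of the conditioning map and `m ≤ mΩ`
  have hmeasBX : Measurable (fun ω => Bᵀ.mulVec (X ω)) := by
    apply measurable_pi_lambda
    intro i
    simp only [Matrix.mulVec, dotProduct]
    exact Finset.measurable_sum _ fun j _ =>
      (measurable_const.mul ((measurable_pi_apply j).comp hXmeas))
  have hm : MeasurableSpace.comap (fun ω' => Bᵀ.mulVec (X ω')) inferInstance ≤ mΩ :=
    measurable_iff_comap_le.mp hmeasBX
  -- component-wise ℒ² and integrability facts
  have hXi : ∀ i, MemLp (fun ω => X ω i) 2 P := fun i =>
    (ContinuousLinearMap.proj (R := ℝ) (φ := fun _ : Fin p => ℝ) i).comp_memLp' hX2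
  have hhalf : (1 : ENNReal) / 1 = 1 / 2 + 1 / 2 := by
    rw [one_div, one_div, inv_one, ENNReal.inv_two_add_inv_two]
  have hmul : ∀ i j, Integrable (fun ω => X ω i * X ω j) P := by
    intro i j
    exact memLp_one_iff_integrable.mp
      ((hXi j).smul (hXi i) (p := 2) (q := 2) (r := 1))
  -- the matrix-valued function `XXᵀ`
  set F₁ : Ω → Fin p → Fin p → ℝ := fun ω => fun i j => X ω i * X ω j with hF₁def
  have hF₁meas : Measurable F₁ := by
    apply measurable_pi_lambda
    intro i
    apply measurable_pi_lambda
    intro j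
    exact ((measurable_pi_apply i).comp hXmeas).mul ((measurable_pi_apply j).comp hXmeas)
  have hF₁int : Integrable F₁ P := by
    refine Integrable.mono'
      (g := fun ω => ∑ i : Fin p, ∑ j : Fin p, |X ω i * X ω j|)
      (integrable_finset_sum _ fun i _ => integrable_finset_sum _ fun j _ => (hmul i j).abs)
      hF₁meas.aestronglyMeasurable ?_
    filter_upwards with ω
    rw [pi_norm_le_iff_of_nonneg (by positivity)]
    intro i
    rw [pi_norm_le_iff_of_nonneg (by positivity)]
    intro j
    rw [Real.norm_eq_abs]
    calc |X ω i * X ω j| ≤ ∑ j' : Fin p, |X ω i * X ω j'| :=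
          Finset.single_le_sum (f := fun j' => |X ω i * X ω j'|)
            (fun _ _ => abs_nonneg _) (Finset.mem_univ j)
      _ ≤ ∑ i' : Fin p, ∑ j' : Fin p, |X ω i' * X ω j'| :=
          Finset.single_le_sum (f := fun i' => ∑ j' : Fin p, |X ω i' * X ω j'|)
            (fun _ _ => Finset.sum_nonneg fun _ _ => abs_nonneg _) (Finset.mem_univ i)
  -- integrability of `Q X` products
  have hQXi : ∀ i, MemLp (fun ω => Q.mulVec (X ω) i) 2 P := by
    intro i
    have hs : (fun ω => Q.mulVec (X ω) i) = ∑ k : Fin p, fun ω => Q i k * X ω k := by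
      funext ω
      simp [Matrix.mulVec, dotProduct, Finset.sum_apply]
    rw [hs]
    exact memLp_finset_sum' _ fun k _ => (hXi k).const_mul (Q i k)
  have hQmul : ∀ i j, Integrable (fun ω => Q.mulVec (X ω) i * Q.mulVec (X ω) j) P := by
    intro i j
    exact memLp_one_iff_integrable.mp
      ((hQXi j).smul (hQXi i) (p := 2) (q := 2) (r := 1))
  -- the value of `∫ (QX)ᵢ (QX)ⱼ`
  have hQint : ∀ i j, ∫ ω, Q.mulVec (X ω) i * Q.mulVec (X ω) j ∂P = (Q * Sig * Qᵀ) i j := by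
    intro i j
    have hexp : ∀ ω, Q.mulVec (X ω) i * Q.mulVec (X ω) j
        = ∑ k : Fin p, ∑ l : Fin p, Q i k * Q j l * (X ω k * X ω l) := by
      intro ω
      simp only [Matrix.mulVec, dotProduct]
      rw [Finset.sum_mul_sum]
      exact Finset.sum_congr rfl fun k _ => Finset.sum_congr rfl fun l _ => by ring
    simp_rw [hexp]
    rw [integral_finset_sum _ fun k _ => integrable_finset_sum _ fun l _ =>
      ((hmul k l).const_mul (Q i k * Q j l))]
    have hin : ∀ k, ∫ ω, ∑ l : Fin p, Q i k * Q j l * (X ω k * X ω l) ∂P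
        = ∑ l : Fin p, Q i k * Q j l * Sig k l := by
      intro k
      rw [integral_finset_sum _ fun l _ => ((hmul k l).const_mul (Q i k * Q j l))]
      exact Finset.sum_congr rfl fun l _ => by
        rw [integral_const_mul, hSig k l]
    simp_rw [hin]
    simp only [Matrix.mul_apply, Matrix.transpose_apply, Finset.sum_mul]
    rw [Finset.sum_comm]
    exact Finset.sum_congr rfl fun k _ => Finset.sum_congr rfl fun l _ => by ring
  obtain ⟨C, hC⟩ := hCCV
  -- conditional expectation of `XXᵀ` in terms of `C` and `Q X`
  have h2 : condExp (MeasurableSpace.comap (fun ω' => Bᵀ.mulVec (X ω')) inferInstance) P F₁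
      =ᵐ[P] fun ω => fun i j => C i j + Q.mulVec (X ω) i * Q.mulVec (X ω) j := by
    filter_upwards [hC, hLCM] with ω h1 hL
    funext i j
    have h1' := congrFun (congrFun h1 i) j
    simp only [Pi.sub_apply] at h1'
    rw [congrFun hL i, congrFun hL j] at h1'
    linarith [h1']
  -- determine `C` by taking expectations
  have hCval : ∀ i j, C i j = Sig i j - (Q * Sig * Qᵀ) i j := by
    intro i j
    set L : (Fin p → Fin p → ℝ) →L[ℝ] ℝ :=
      (ContinuousLinearMap.proj (R := ℝ) (φ := fun _ : Fin p => ℝ) j).comp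
        (ContinuousLinearMap.proj (R := ℝ) (φ := fun _ : Fin p => Fin p → ℝ) i) with hLdef
    have e1 : ∫ ω, condExp
          (MeasurableSpace.comap (fun ω' => Bᵀ.mulVec (X ω')) inferInstance) P F₁ ω i j ∂P
        = Sig i j := by
      have ha : ∫ ω, condExp
            (MeasurableSpace.comap (fun ω' => Bᵀ.mulVec (X ω')) inferInstance) P F₁ ω i j ∂P
          = (∫ ω, condExp
            (MeasurableSpace.comap (fun ω' => Bᵀ.mulVec (X ω')) inferInstance) P F₁ ω ∂P) i j :=
        L.integral_comp_comm integrable_condExp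
      have hb : ∫ ω, F₁ ω i j ∂P = (∫ ω, F₁ ω ∂P) i j := L.integral_comp_comm hF₁int
      rw [ha, integral_condExp hm, ← hb, hSig i j]
    have e2 : ∫ ω, condExp
          (MeasurableSpace.comap (fun ω' => Bᵀ.mulVec (X ω')) inferInstance) P F₁ ω i j ∂P
        = C i j + (Q * Sig * Qᵀ) i j := by
      have hcongr := integral_congr_ae (h2.mono fun ω h => congrFun (congrFun h i) j)
      rw [hcongr, integral_add (integrable_const _) (hQmul i j), integral_const,
        probReal_univ, one_smul, hQint i j]
    rw [e1] at e2
    linarith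
  -- rewrite the function whose conditional expectation we take as a difference
  have hsplit : (fun ω => fun i j => X ω i * X ω j - Sig i j)
      = F₁ - (fun _ : Ω => fun i j => Sig i j) := rfl
  rw [hsplit]
  refine (condExp_sub hF₁int (integrable_const _) _).trans ?_
  rw [condExp_const hm]
  filter_upwards [h2] with ω hω
  funext i j
  simp only [Pi.sub_apply, hω]
  have hRHS : ((Q * (Matrix.of (fun i' j' => X ω i' * X ω j') - Sig) * Qᵀ)) i j
      = (Q * Matrix.of (fun i' j' => X ω i' * X ω j') * Qᵀ) i j - (Q * Sig * Qᵀ) i j := by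
    rw [Matrix.mul_sub, Matrix.sub_mul]
    simp [Matrix.sub_apply]
  have hQM : (Q * Matrix.of (fun i' j' => X ω i' * X ω j') * Qᵀ) i j
      = Q.mulVec (X ω) i * Q.mulVec (X ω) j := by
    have hR : Q.mulVec (X ω) i * Q.mulVec (X ω) j
        = ∑ k : Fin p, ∑ l : Fin p, (Q i k * X ω k) * (Q j l * X ω l) := by
      simp only [Matrix.mulVec, dotProduct]
      exact Finset.sum_mul_sum _ _ _ _
    rw [hR]
    simp only [Matrix.mul_apply, Matrix.transpose_apply, Matrix.of_apply, Finset.sum_mul]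
    rw [Finset.sum_comm]
    exact Finset.sum_congr rfl fun k _ => Finset.sum_congr rfl fun l _ => by ring
  rw [hRHS, hQM, hCval i j]
  ring
end
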